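/- For all reals σ, β with 0 < σ < β, the following exact evaluation of the a-integral holds: ∫_{ℝ^l} exp( −|y − W·a|²/(2σ²) ) · exp( −aᵀ (WᵀW) a / (2(β² − σ²)) ) da = (σ/β)^l · √( (2π)^l (β² − σ²)^l / det(WᵀW) ) · exp( −yᵀê/(2σ²) ) · exp( −|ŷ|²/(2β²) ). -/

import Mathlib

open Matrix MeasureTheory Real


open Matrix MeasureTheory Real

lemma std_gauss (l : ℕ) :
    ∫ x : Fin l → ℝ, Real.exp (-(x ⬝ᵥ x) / 2) = Real.sqrt (2 * π) ^ l := by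
  have h1 : ∀ x : Fin l → ℝ, Real.exp (-(x ⬝ᵥ x) / 2)
      = ∏ i, Real.exp (-(1/2 : ℝ) * (x i) ^ 2) := by
    intro x
    rw [← Real.exp_sum]
    congr 1
    simp [dotProduct, Finset.sum_div, neg_div, Finset.sum_neg_distrib]
    ring_nf
  simp_rw [h1]
  rw [volume_pi, integral_fintype_prod_eq_pow (ι := Fin l) (fun t : ℝ => Real.exp (-(1/2:ℝ) * t ^ 2))]
  rw [integral_gaussian]
  norm_num [Real.sqrt_mul_self, mul_comm]

open scoped MatrixOrder in
lemma gauss_posdef {l : ℕ} {M : Matrix (Fin l) (Fin l) ℝ} (hM : M.PosDef) :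
    ∫ x : Fin l → ℝ, Real.exp (-(x ⬝ᵥ M.mulVec x) / 2)
      = Real.sqrt ((2 * π) ^ l / M.det) := by
  set S := CFC.sqrt M with hSdef
  have hSS : S * S = M := CFC.sqrt_mul_sqrt_self M hM.posSemidef.nonneg
  have hSH : Sᵀ = S := by
    have := (Matrix.nonneg_iff_posSemidef.mp (CFC.sqrt_nonneg M)).isHermitian
    rw [← Matrix.conjTranspose_eq_transpose_of_trivial]; exact this
  have hdetM : 0 < M.det := hM.det_pos
  have hdetS2 : S.det * S.det = M.det := by rw [← Matrix.det_mul, hSS]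
  have hdetSnn : 0 ≤ S.det := by
    have h := CFC.sqrt_mul_sqrt_self S (CFC.sqrt_nonneg M)
    calc (0:ℝ) ≤ _ * _ := mul_self_nonneg ((CFC.sqrt S).det)
    _ = S.det := by rw [← Matrix.det_mul, h]
  have hdetSpos : 0 < S.det := by
    rcases hdetSnn.lt_or_eq with h | h
    · exact h
    · exfalso; rw [← h] at hdetS2; simp at hdetS2; linarith
  have hvs : ∀ x : Fin l → ℝ, x ᵥ* S = S *ᵥ x := by
    intro x
    nth_rewrite 1 [← hSH]
    exact Matrix.vecMul_transpose S x
  have key : ∀ x : Fin l → ℝ, x ⬝ᵥ M.mulVec x = (S.mulVec x) ⬝ᵥ (S.mulVec x) := by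
    intro x
    rw [← hSS, ← Matrix.mulVec_mulVec, Matrix.dotProduct_mulVec, hvs]
  simp_rw [key]
  have hmap := Real.map_matrix_volume_pi_eq_smul_volume_pi (M := S) hdetSpos.ne'
  have hmeas : Measurable (Matrix.toLin' S) :=
    (Matrix.toLin' S).continuous_on_pi.measurable
  have h1 : (∫ x : Fin l → ℝ, Real.exp (-((S.mulVec x) ⬝ᵥ (S.mulVec x)) / 2))
      = ∫ u : Fin l → ℝ, Real.exp (-(u ⬝ᵥ u) / 2)
          ∂(Measure.map (Matrix.toLin' S) volume) := by
    rw [integral_map hmeas.aemeasurable]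
    · simp [Matrix.toLin'_apply]
    · apply Continuous.aestronglyMeasurable
      exact continuous_exp.comp
        ((continuous_id.dotProduct continuous_id).neg.div_const 2)
  rw [h1, hmap, integral_smul_measure, std_gauss]
  have hsqrtM : Real.sqrt M.det = S.det := by
    rw [← hdetS2, Real.sqrt_mul_self hdetSnn]
  rw [Real.sqrt_div' _ (by positivity), hsqrtM,
    ENNReal.toReal_ofReal (by positivity), smul_eq_mul, abs_inv,
    abs_of_pos hdetSpos]
  have hs : Real.sqrt ((2*π : ℝ)^l) = Real.sqrt (2*π) ^ l := by
    have h2 : (Real.sqrt (2*π) ^ l) ^ 2 = ((2*π : ℝ))^l := by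
      rw [← pow_mul, mul_comm l 2, pow_mul, Real.sq_sqrt Real.two_pi_pos.le]
    rw [← h2, Real.sqrt_sq (by positivity)]
  rw [hs]
  ring

lemma isHermitian_of_transpose_eq {n : ℕ} {M : Matrix (Fin n) (Fin n) ℝ}
    (h : Mᵀ = M) : M.IsHermitian := by
  have : Mᴴ = Mᵀ := by ext i j; simp [Matrix.conjTranspose_apply]
  rw [Matrix.IsHermitian, this, h]

/-- exact evaluation of the `a`-integral in the evidence. -/
theorem evidence_a_integral
    (N l : ℕ) (hN : 0 < N) (hl : 0 < l) (hle : l ≤ N)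
    (W : Matrix (Fin N) (Fin l) ℝ) (hW : IsUnit (Wᵀ * W).det)
    (y : Fin N → ℝ) (σ β : ℝ) (hσ : 0 < σ) (hσβ : σ < β) :
    (∫ a : Fin l → ℝ,
        Real.exp (-((y - W.mulVec a) ⬝ᵥ (y - W.mulVec a)) / (2 * σ ^ 2)) *
          Real.exp (-(a ⬝ᵥ (Wᵀ * W).mulVec a) / (2 * (β ^ 2 - σ ^ 2)))) =
      (σ / β) ^ l *
        Real.sqrt ((2 * π) ^ l * (β ^ 2 - σ ^ 2) ^ l / (Wᵀ * W).det) *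
        Real.exp (-(y ⬝ᵥ (y - W.mulVec ((Wᵀ * W)⁻¹.mulVec (Wᵀ.mulVec y)))) /
          (2 * σ ^ 2)) *
        Real.exp (-((W.mulVec ((Wᵀ * W)⁻¹.mulVec (Wᵀ.mulVec y))) ⬝ᵥ
            (W.mulVec ((Wᵀ * W)⁻¹.mulVec (Wᵀ.mulVec y)))) / (2 * β ^ 2)) := by
  have hβ : 0 < β := hσ.trans hσβ
  set t : ℝ := β ^ 2 - σ ^ 2 with ht_def
  have ht : 0 < t := by have := hσβ; nlinarith
  set c₀ : ℝ := β ^ 2 / (σ ^ 2 * t) with hc₀_def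
  have hc₀ : 0 < c₀ := by positivity
  set A : Matrix (Fin l) (Fin l) ℝ := Wᵀ * W with hA_def
  have hAH : Aᵀ = A := by
    rw [hA_def, Matrix.transpose_mul, Matrix.transpose_transpose]
  have hAinv : A * A⁻¹ = 1 := Matrix.mul_nonsing_inv _ hW
  have hinvA : A⁻¹ * A = 1 := Matrix.nonsing_inv_mul _ hW
  have hWW : ∀ x : Fin l → ℝ, x ⬝ᵥ A.mulVec x = (W.mulVec x) ⬝ᵥ (W.mulVec x) := by
    intro x
    rw [hA_def, ← Matrix.mulVec_mulVec, Matrix.dotProduct_mulVec,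
      ← Matrix.mulVec_transpose, Matrix.transpose_transpose]
  have hsym : ∀ u w : Fin l → ℝ, u ⬝ᵥ A.mulVec w = (A.mulVec u) ⬝ᵥ w := by
    intro u w
    rw [Matrix.dotProduct_mulVec]
    congr 1
    nth_rewrite 1 [← hAH]
    exact Matrix.vecMul_transpose A u
  have hApos : A.PosDef := by
    refine Matrix.PosDef.of_dotProduct_mulVec_pos (isHermitian_of_transpose_eq hAH) fun x hx => ?_
    have hstar : (star x : Fin l → ℝ) = x := by ext i; simp
    rw [hstar, hWW]
    have hWx : W.mulVec x ≠ 0 := by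
      intro h0
      apply hx
      have : A.mulVec x = 0 := by
        rw [hA_def, ← Matrix.mulVec_mulVec, h0, Matrix.mulVec_zero]
      calc x = (A⁻¹ * A).mulVec x := by rw [hinvA, Matrix.one_mulVec]
      _ = A⁻¹.mulVec (A.mulVec x) := by rw [Matrix.mulVec_mulVec]
      _ = 0 := by rw [this, Matrix.mulVec_zero]
    have hnn : 0 ≤ (W.mulVec x) ⬝ᵥ (W.mulVec x) :=
      Finset.sum_nonneg fun i _ => mul_self_nonneg _
    rcases hnn.lt_or_eq with h | h
    · exact h
    · exact absurd (dotProduct_self_eq_zero.mp h.symm) hWx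
  set M : Matrix (Fin l) (Fin l) ℝ := c₀ • A with hM_def
  have hMpos : M.PosDef := by
    refine Matrix.PosDef.of_dotProduct_mulVec_pos (isHermitian_of_transpose_eq ?_) fun x hx => ?_
    · rw [hM_def, Matrix.transpose_smul, hAH]
    · have hstar : (star x : Fin l → ℝ) = x := by ext i; simp
      rw [hM_def, Matrix.smul_mulVec, hstar, dotProduct_smul, smul_eq_mul]
      have := hApos.dotProduct_mulVec_pos hx
      rw [show (star x : Fin l → ℝ) = x from by ext i; simp] at this
      exact mul_pos hc₀ this
  have hdetM : M.det = c₀ ^ l * A.det := by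
    rw [hM_def, Matrix.det_smul, Fintype.card_fin]
  set v : Fin l → ℝ := Wᵀ.mulVec y with hv_def
  set ahat : Fin l → ℝ := A⁻¹.mulVec v with hahat_def
  have hAahat : A.mulVec ahat = v := by
    rw [hahat_def, Matrix.mulVec_mulVec, hAinv, Matrix.one_mulVec]
  set m : Fin l → ℝ := (t / β ^ 2) • ahat with hm_def
  have hyWa : ∀ a : Fin l → ℝ, y ⬝ᵥ W.mulVec a = v ⬝ᵥ a := by
    intro a
    rw [Matrix.dotProduct_mulVec, hv_def, Matrix.mulVec_transpose]
  set E : ℝ := v ⬝ᵥ ahat with hE_def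
  set K : ℝ := -(y ⬝ᵥ y) / (2 * σ ^ 2) + E * t / (2 * β ^ 2 * σ ^ 2) with hK_def
  -- pointwise identity
  have hpoint : ∀ a : Fin l → ℝ,
      Real.exp (-((y - W.mulVec a) ⬝ᵥ (y - W.mulVec a)) / (2 * σ ^ 2)) *
        Real.exp (-(a ⬝ᵥ A.mulVec a) / (2 * t))
      = Real.exp K * Real.exp (-((a - m) ⬝ᵥ M.mulVec (a - m)) / 2) := by
    intro a
    rw [← Real.exp_add, ← Real.exp_add]
    congr 1
    have e1 : (y - W.mulVec a) ⬝ᵥ (y - W.mulVec a)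
        = y ⬝ᵥ y - 2 * (v ⬝ᵥ a) + a ⬝ᵥ A.mulVec a := by
      rw [sub_dotProduct, dotProduct_sub, dotProduct_sub,
        hWW, hyWa, dotProduct_comm (W.mulVec a) y, hyWa]
      ring
    have e2 : (a - m) ⬝ᵥ M.mulVec (a - m)
        = c₀ * (a ⬝ᵥ A.mulVec a - 2 * (t / β ^ 2) * (v ⬝ᵥ a)
            + (t / β ^ 2) ^ 2 * E) := by
      have hAm : A.mulVec m = (t / β ^ 2) • v := by
        rw [hm_def, Matrix.mulVec_smul, hAahat]
      have hsymm' : ahat ⬝ᵥ A.mulVec a = v ⬝ᵥ a := by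
        rw [hsym, hAahat]
      rw [hM_def, Matrix.smul_mulVec, dotProduct_smul, smul_eq_mul]
      congr 1
      rw [Matrix.mulVec_sub, hAm, sub_dotProduct, dotProduct_sub,
        dotProduct_sub, hm_def, smul_dotProduct, hsymm',
        dotProduct_smul, dotProduct_smul, smul_dotProduct,
        dotProduct_comm a v, hE_def, dotProduct_comm ahat v]
      simp only [smul_eq_mul]
      ring
    rw [e1, e2, hK_def, hc₀_def]
    have hσ' : (σ : ℝ) ^ 2 ≠ 0 := by positivity
    have hβ' : (β : ℝ) ^ 2 ≠ 0 := by positivity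
    field_simp
    ring
  calc (∫ a : Fin l → ℝ,
        Real.exp (-((y - W.mulVec a) ⬝ᵥ (y - W.mulVec a)) / (2 * σ ^ 2)) *
          Real.exp (-(a ⬝ᵥ A.mulVec a) / (2 * t)))
      = ∫ a : Fin l → ℝ,
          Real.exp K * Real.exp (-((a - m) ⬝ᵥ M.mulVec (a - m)) / 2) := by
        exact integral_congr_ae (Filter.Eventually.of_forall hpoint)
    _ = Real.exp K * ∫ a : Fin l → ℝ,
          Real.exp (-((a - m) ⬝ᵥ M.mulVec (a - m)) / 2) := by
        rw [integral_const_mul]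
    _ = Real.exp K * ∫ a : Fin l → ℝ,
          Real.exp (-(a ⬝ᵥ M.mulVec a) / 2) := by
        rw [integral_sub_right_eq_self
          (fun x : Fin l → ℝ => Real.exp (-(x ⬝ᵥ M.mulVec x) / 2)) m]
    _ = Real.exp K * Real.sqrt ((2 * π) ^ l / M.det) := by
        rw [gauss_posdef hMpos]
    _ = (σ / β) ^ l *
        Real.sqrt ((2 * π) ^ l * t ^ l / A.det) *
        Real.exp (-(y ⬝ᵥ (y - W.mulVec ahat)) / (2 * σ ^ 2)) *
        Real.exp (-((W.mulVec ahat) ⬝ᵥ (W.mulVec ahat)) / (2 * β ^ 2)) := by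
      have hexp : Real.exp K
          = Real.exp (-(y ⬝ᵥ (y - W.mulVec ahat)) / (2 * σ ^ 2)) *
            Real.exp (-((W.mulVec ahat) ⬝ᵥ (W.mulVec ahat)) / (2 * β ^ 2)) := by
        rw [← Real.exp_add]
        congr 1
        have h1 : y ⬝ᵥ (y - W.mulVec ahat) = y ⬝ᵥ y - E := by
          rw [dotProduct_sub, hyWa, hE_def]
        have h2 : (W.mulVec ahat) ⬝ᵥ (W.mulVec ahat) = E := by
          rw [← hWW, hsym, hAahat, hE_def]
        rw [h1, h2, hK_def, ht_def]
        have hσ' : (σ : ℝ) ^ 2 ≠ 0 := by positivity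
        have hβ' : (β : ℝ) ^ 2 ≠ 0 := by positivity
        field_simp
        ring
      have hsq : Real.sqrt ((2 * π) ^ l / M.det)
          = (σ / β) ^ l * Real.sqrt ((2 * π) ^ l * t ^ l / A.det) := by
        have hdetA : 0 < A.det := hApos.det_pos
        have h1 : c₀⁻¹ = (σ / β) ^ 2 * t := by
          rw [hc₀_def]
          field_simp
        have hpow : ((σ / β) ^ l) ^ 2 * t ^ l = (c₀ ^ l)⁻¹ := by
          rw [← pow_mul, mul_comm l 2, pow_mul, ← mul_pow, ← h1, inv_pow]
        have harg : (2 * π) ^ l / M.det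
            = ((σ / β) ^ l) ^ 2 * ((2 * π) ^ l * t ^ l / A.det) := by
          rw [hdetM, div_eq_mul_inv, mul_inv, ← hpow]
          field_simp
        rw [harg, Real.sqrt_mul (sq_nonneg _), Real.sqrt_sq (by positivity)]
      rw [hexp, hsq]
      ring
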